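/- Let X be a real Banach space such that the closed convex hull of the set of extreme points of the closed unit ball of X has non-empty interior in X. Then every convex body K ⊆ X satisfies the strong Mankiewicz property: for every normed space Y, every convex subset L ⊆ Y, and every surjective isometry Δ : K → L, the map Δ is affine, i.e. Δ(t x + (1 − t) y) = t Δ(x) + (1 − t) Δ(y) for all x, y ∈ K and all t ∈ [0, 1]. -/

import Mathlib

open Set Metric Filter Topology

set_option linter.unusedVariables false

section MankiewiczCore

variable {X Y : Type*} [NormedAddCommGroup X] [NormedSpace ℝ X]
  [NormedAddCommGroup Y] [NormedSpace ℝ Y]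
  {K : Set X} {L : Set Y} {Δ : X → Y}

/-- An extreme point of the closed unit ball has norm one (in a nontrivial space). -/
lemma extremePoint_norm_one [Nontrivial X] {e : X}
    (he : e ∈ Set.extremePoints ℝ (Metric.closedBall (0 : X) 1)) : ‖e‖ = 1 := by
  obtain ⟨heB, hext⟩ := he
  rw [Metric.mem_closedBall, dist_zero_right] at heB
  by_contra h
  have hlt : ‖e‖ < 1 := lt_of_le_of_ne heB h
  obtain ⟨w, hw⟩ := exists_ne (0 : X)
  set v : X := ((1 - ‖e‖) / ‖w‖) • w with hv
  have hnw : (0:ℝ) < ‖w‖ := norm_pos_iff.mpr hw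
  have hnv : ‖v‖ = 1 - ‖e‖ := by
    rw [hv, norm_smul, Real.norm_eq_abs, abs_of_pos (by apply div_pos <;> linarith), div_mul_cancel₀ _ (ne_of_gt hnw)]
  have hv0 : v ≠ 0 := by
    intro h0
    rw [h0, norm_zero] at hnv
    linarith
  have h1 : e - v ∈ Metric.closedBall (0 : X) 1 := by
    rw [Metric.mem_closedBall, dist_zero_right]
    calc ‖e - v‖ ≤ ‖e‖ + ‖v‖ := norm_sub_le _ _
    _ = 1 := by rw [hnv]; ring
  have h2 : e + v ∈ Metric.closedBall (0 : X) 1 := by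
    rw [Metric.mem_closedBall, dist_zero_right]
    calc ‖e + v‖ ≤ ‖e‖ + ‖v‖ := norm_add_le _ _
    _ = 1 := by rw [hnv]; ring
  have hseg : e ∈ openSegment ℝ (e - v) (e + v) := by
    refine ⟨1/2, 1/2, by norm_num, by norm_num, by norm_num, ?_⟩
    module
  have h3 := hext h1 h2 hseg
  apply hv0
  have : e - v = e := h3
  have := sub_eq_self.mp this
  simpa using this

/-- Negation of an extreme point of the closed unit ball is extreme. -/
lemma extremePoint_neg {e : X}
    (he : e ∈ Set.extremePoints ℝ (Metric.closedBall (0 : X) 1)) :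
    -e ∈ Set.extremePoints ℝ (Metric.closedBall (0 : X) 1) := by
  obtain ⟨heB, hext⟩ := he
  constructor
  · rw [Metric.mem_closedBall, dist_zero_right, norm_neg]
    rwa [Metric.mem_closedBall, dist_zero_right] at heB
  · intro x₁ h1 x₂ h2 hseg
    obtain ⟨a, b, ha, hb, hab, habe⟩ := hseg
    have h1' : -x₁ ∈ Metric.closedBall (0 : X) 1 := by
      rw [Metric.mem_closedBall, dist_zero_right, norm_neg]
      rwa [Metric.mem_closedBall, dist_zero_right] at h1
    have h2' : -x₂ ∈ Metric.closedBall (0 : X) 1 := by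
      rw [Metric.mem_closedBall, dist_zero_right, norm_neg]
      rwa [Metric.mem_closedBall, dist_zero_right] at h2
    have hseg' : e ∈ openSegment ℝ (-x₁) (-x₂) := by
      refine ⟨a, b, ha, hb, hab, ?_⟩
      rw [smul_neg, smul_neg, ← neg_add, habe, neg_neg]
    have := hext h1' h2' hseg'
    exact neg_eq_iff_eq_neg.mp this

/-- Metric midpoints in extreme directions are unique. -/
lemma eq_of_dist_extreme {e p w : X} {c : ℝ}
    (he : e ∈ Set.extremePoints ℝ (Metric.closedBall (0 : X) 1)) (hc : 0 < c)
    (h1 : ‖w - (p + c • e)‖ = c) (h2 : ‖w - (p - c • e)‖ = c) : w = p := by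
  set A : X := c⁻¹ • (p + c • e - w) with hA
  set B : X := c⁻¹ • (w - (p - c • e)) with hB
  have hnA : A ∈ Metric.closedBall (0 : X) 1 := by
    rw [Metric.mem_closedBall, dist_zero_right, hA, norm_smul, Real.norm_eq_abs,
      abs_of_pos (inv_pos.mpr hc), ← norm_neg]
    rw [show -(p + c • e - w) = w - (p + c • e) by abel, h1]
    rw [inv_mul_cancel₀ (ne_of_gt hc)]
  have hnB : B ∈ Metric.closedBall (0 : X) 1 := by
    rw [Metric.mem_closedBall, dist_zero_right, hB, norm_smul, Real.norm_eq_abs,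
      abs_of_pos (inv_pos.mpr hc), h2, inv_mul_cancel₀ (ne_of_gt hc)]
  have hseg : e ∈ openSegment ℝ A B := by
    refine ⟨1/2, 1/2, by norm_num, by norm_num, by norm_num, ?_⟩
    rw [hA, hB]
    have hc' : c⁻¹ * c = 1 := inv_mul_cancel₀ (ne_of_gt hc)
    match_scalars <;> field_simp <;> ring
  have hAB := (he.2 hnA hnB hseg)
  have : A = B := hAB.trans (he.2 hnB hnA (by rwa [openSegment_symm] at hseg)).symm
  rw [hA, hB] at this
  have h4 := smul_right_injective X (inv_ne_zero (ne_of_gt hc)) this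
  have h5 : p + c • e - w = w - (p - c • e) := h4
  have h6 := sub_eq_sub_iff_add_eq_add.mp h5
  have h7 : (2:ℝ) • w = (2:ℝ) • p := by
    rw [two_smul, two_smul]
    rw [← h6]; abel
  exact smul_right_injective X (by norm_num) h7

/-- midpoint preservation for pairs in an extreme direction, positive case -/
lemma extreme_midpoint_pos [Nontrivial X]
    (hKconv : Convex ℝ K) (hL : Convex ℝ L) (hmap : Set.MapsTo Δ K L)
    (hsurj : Set.SurjOn Δ K L)
    (hiso : ∀ x ∈ K, ∀ y ∈ K, ‖Δ x - Δ y‖ = ‖x - y‖)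
    {e : X} (he : e ∈ Set.extremePoints ℝ (Metric.closedBall (0 : X) 1))
    {y z m : X} (hy : y ∈ K) (hz : z ∈ K) {r : ℝ} (hr0 : 0 < r)
    (hr : z - y = r • e) (hm : y + z = m + m) :
    Δ y + Δ z = Δ m + Δ m := by
  have h2m : (2:ℝ) • m = y + z := by rw [two_smul]; exact hm.symm
  have hmval : m = (2⁻¹:ℝ) • y + (2⁻¹:ℝ) • z := by
    have : m = (2⁻¹:ℝ) • ((2:ℝ) • m) := by rw [smul_smul]; norm_num
    rw [this, h2m, smul_add]
  have hmK : m ∈ K := by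
    rw [hmval]; exact hKconv hy hz (by norm_num) (by norm_num) (by norm_num)
  have hzm : z - m = (r/2) • e := by
    have : (2:ℝ) • (z - m) = (2:ℝ) • ((r/2) • e) := by
      rw [smul_sub, h2m, smul_smul]
      rw [show (2:ℝ) * (r/2) = r by ring, ← hr]
      module
    exact smul_right_injective X (by norm_num) this
  have hym : y - m = -((r/2) • e) := by
    rw [← hzm]
    have h0 : (y - m) + (z - m) = 0 := by rw [sub_add_sub_comm, hm, sub_self]
    exact eq_neg_of_add_eq_zero_left h0
  have henorm := extremePoint_norm_one he
  set μ := (2⁻¹:ℝ) • (Δ y + Δ z) with hμ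
  have hμL : μ ∈ L := by
    rw [hμ, smul_add]
    exact hL (hmap hy) (hmap hz) (by norm_num) (by norm_num) (by norm_num)
  obtain ⟨w, hwK, hwμ⟩ := hsurj hμL
  have hyz : ‖y - z‖ = r := by
    have : y - z = -(r • e) := by rw [← hr]; abel
    rw [this, norm_neg, norm_smul, henorm, Real.norm_eq_abs, abs_of_pos hr0, mul_one]
  have hzy : ‖z - y‖ = r := by
    rw [hr, norm_smul, henorm, Real.norm_eq_abs, abs_of_pos hr0, mul_one]
  have hdz : ‖w - z‖ = r/2 := by
    rw [← hiso w hwK z hz, hwμ, hμ]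
    rw [show (2⁻¹:ℝ) • (Δ y + Δ z) - Δ z = (2⁻¹:ℝ) • (Δ y - Δ z) by module]
    rw [norm_smul, hiso y hy z hz, hyz, Real.norm_eq_abs,
      abs_of_pos (by norm_num : (0:ℝ) < 2⁻¹)]
    ring
  have hdy : ‖w - y‖ = r/2 := by
    rw [← hiso w hwK y hy, hwμ, hμ]
    rw [show (2⁻¹:ℝ) • (Δ y + Δ z) - Δ y = (2⁻¹:ℝ) • (Δ z - Δ y) by module]
    rw [norm_smul, hiso z hz y hy, hzy, Real.norm_eq_abs,
      abs_of_pos (by norm_num : (0:ℝ) < 2⁻¹)]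
    ring
  have hw : w = m := by
    refine eq_of_dist_extreme he (c := r/2) (by positivity) ?_ ?_
    · rw [show m + (r/2) • e = z by rw [← hzm]; abel]
      exact hdz
    · have hy2 : m - (r/2) • e = y := by
        rw [← hzm]
        rw [show m - (z - m) = (m + m) - z by abel, ← hm]
        abel
      rw [hy2]
      exact hdy
  rw [← hw, hwμ, hμ]
  module


/-- midpoint preservation for pairs in an extreme direction -/
lemma extreme_midpoint [Nontrivial X]
    (hKconv : Convex ℝ K) (hL : Convex ℝ L) (hmap : Set.MapsTo Δ K L)
    (hsurj : Set.SurjOn Δ K L)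
    (hiso : ∀ x ∈ K, ∀ y ∈ K, ‖Δ x - Δ y‖ = ‖x - y‖)
    {e : X} (he : e ∈ Set.extremePoints ℝ (Metric.closedBall (0 : X) 1))
    {y z m : X} (hy : y ∈ K) (hz : z ∈ K) {r : ℝ}
    (hr : z - y = r • e) (hm : y + z = m + m) :
    Δ y + Δ z = Δ m + Δ m := by
  rcases lt_trichotomy r 0 with hneg | hzero | hpos
  · have hr' : z - y = (-r) • (-e) := by rw [smul_neg, neg_smul, neg_neg]; exact hr
    exact extreme_midpoint_pos hKconv hL hmap hsurj hiso (extremePoint_neg he)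
      hy hz (by linarith) hr' hm
  · have hzy : z = y := by
      have : z - y = 0 := by rw [hr, hzero, zero_smul]
      exact sub_eq_zero.mp this
    subst hzy
    have hmz : m = z := by
      have h7 : (2:ℝ) • m = (2:ℝ) • z := by
        rw [two_smul, two_smul]; exact hm.symm
      exact smul_right_injective X (by norm_num) h7
    rw [hmz]
  · exact extreme_midpoint_pos hKconv hL hmap hsurj hiso he hy hz hpos hr hm

/-- `u` is a good direction with room constant `c`. -/
def IsGood (K : Set X) (Δ : X → Y) (c : ℝ) (u : X) : Prop :=
  ‖u‖ ≤ c ∧ ∀ x : X, ∀ s : ℝ, 0 < s → Metric.closedBall x (c * s) ⊆ K →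
    Δ (x + s • u) + Δ (x - s • u) = Δ x + Δ x

lemma isGood_zero : IsGood K Δ 0 (0 : X) := by
  refine ⟨by simp, fun x s hs hball => ?_⟩
  simp

lemma isGood_mono {c c' : ℝ} {u : X} (h : IsGood K Δ c u) (hcc : c ≤ c') :
    IsGood K Δ c' u := by
  refine ⟨h.1.trans hcc, fun x s hs hball => ?_⟩
  refine h.2 x s hs (fun w hw => hball ?_)
  exact Metric.closedBall_subset_closedBall
    (mul_le_mul_of_nonneg_right hcc (le_of_lt hs)) hw

lemma isGood_extreme [Nontrivial X]
    (hKconv : Convex ℝ K) (hL : Convex ℝ L) (hmap : Set.MapsTo Δ K L)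
    (hsurj : Set.SurjOn Δ K L)
    (hiso : ∀ x ∈ K, ∀ y ∈ K, ‖Δ x - Δ y‖ = ‖x - y‖)
    {e : X} (he : e ∈ Set.extremePoints ℝ (Metric.closedBall (0 : X) 1)) :
    IsGood K Δ 1 e := by
  refine ⟨le_of_eq (extremePoint_norm_one he), fun x s hs hball => ?_⟩
  have h1 : x + s • e ∈ K := by
    apply hball
    rw [Metric.mem_closedBall, dist_eq_norm, add_sub_cancel_left, norm_smul,
      Real.norm_eq_abs, abs_of_pos hs, extremePoint_norm_one he, one_mul]
    linarith
  have h2 : x - s • e ∈ K := by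
    apply hball
    rw [Metric.mem_closedBall, dist_eq_norm]
    rw [show x - s • e - x = -(s • e) by abel, norm_neg, norm_smul,
      Real.norm_eq_abs, abs_of_pos hs, extremePoint_norm_one he, one_mul]
    linarith
  have := extreme_midpoint hKconv hL hmap hsurj hiso he h2 h1
    (r := 2*s) (m := x) (by rw [show x + s • e - (x - s • e) = (2*s) • e by module])
    (by abel)
  rw [← this]; abel

set_option maxHeartbeats 1000000 in
/-- Key step: good directions are stable under adding a multiple of an extreme point. -/
lemma isGood_add_extreme [Nontrivial X]
    (hKconv : Convex ℝ K) (hL : Convex ℝ L) (hmap : Set.MapsTo Δ K L)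
    (hsurj : Set.SurjOn Δ K L)
    (hiso : ∀ x ∈ K, ∀ y ∈ K, ‖Δ x - Δ y‖ = ‖x - y‖)
    {e : X} (he : e ∈ Set.extremePoints ℝ (Metric.closedBall (0 : X) 1))
    {u : X} {c lam : ℝ} (hu : IsGood K Δ c u) :
    IsGood K Δ (c + |lam|) (u + lam • e) := by
  have henorm := extremePoint_norm_one he
  have hc0 : 0 ≤ c := le_trans (norm_nonneg u) hu.1
  constructor
  · calc ‖u + lam • e‖ ≤ ‖u‖ + ‖lam • e‖ := norm_add_le _ _
      _ = ‖u‖ + |lam| := by rw [norm_smul, Real.norm_eq_abs, henorm, mul_one]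
      _ ≤ c + |lam| := by linarith [hu.1]
  intro x s hs hball
  rcases eq_or_ne lam 0 with hlam0 | hlam0
  · rw [hlam0, zero_smul, add_zero]
    refine hu.2 x s hs (fun w hw => hball ?_)
    refine Metric.closedBall_subset_closedBall ?_ hw
    have : |lam| = 0 := by rw [hlam0, abs_zero]
    nlinarith
  set a : X := s • u with ha
  set b : X := (s * lam) • e with hb
  have hsplit : s • (u + lam • e) = a + b := by
    rw [ha, hb, smul_add, smul_smul]
  have hna : ‖a‖ ≤ c * s := by
    rw [ha, norm_smul, Real.norm_eq_abs, abs_of_pos hs]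
    calc s * ‖u‖ ≤ s * c := mul_le_mul_of_nonneg_left hu.1 (le_of_lt hs)
      _ = c * s := by ring
  have hnb : ‖b‖ = |lam| * s := by
    rw [hb, norm_smul, henorm, mul_one, Real.norm_eq_abs, abs_mul, abs_of_pos hs]
    ring
  have hmem : ∀ v : X, ‖v‖ ≤ (c + |lam|) * s → x + v ∈ K := by
    intro v hv
    apply hball
    rw [Metric.mem_closedBall, dist_eq_norm, add_sub_cancel_left]
    exact hv
  have habs : (0:ℝ) ≤ |lam| := abs_nonneg lam
  have hK1 : x + (a + b) ∈ K := by
    refine hmem _ ?_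
    calc ‖a + b‖ ≤ ‖a‖ + ‖b‖ := norm_add_le _ _
      _ ≤ (c + |lam|) * s := by rw [hnb] at *; nlinarith
  have hK2 : x + (a - b) ∈ K := by
    refine hmem _ ?_
    calc ‖a - b‖ ≤ ‖a‖ + ‖b‖ := norm_sub_le _ _
      _ ≤ (c + |lam|) * s := by rw [hnb] at *; nlinarith
  have hK3 : x + (b - a) ∈ K := by
    refine hmem _ ?_
    calc ‖b - a‖ ≤ ‖b‖ + ‖a‖ := norm_sub_le _ _
      _ ≤ (c + |lam|) * s := by rw [hnb] at *; nlinarith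
  have hK4 : x - (a + b) ∈ K := by
    rw [sub_eq_add_neg]
    refine hmem _ ?_
    calc ‖-(a + b)‖ = ‖a + b‖ := norm_neg _
      _ ≤ ‖a‖ + ‖b‖ := norm_add_le _ _
      _ ≤ (c + |lam|) * s := by rw [hnb] at *; nlinarith
  have hKpa : x + a ∈ K := by
    refine hmem _ ?_
    nlinarith
  have hKma : x - a ∈ K := by
    rw [sub_eq_add_neg]
    refine hmem _ ?_
    rw [norm_neg]; nlinarith
  have hKpb : x + b ∈ K := by
    refine hmem _ ?_
    rw [hnb]; nlinarith
  have hKmb : x - b ∈ K := by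
    rw [sub_eq_add_neg]
    refine hmem _ ?_
    rw [norm_neg, hnb]; nlinarith
  -- the four midpoint identities
  have I1 : Δ (x + (a - b)) + Δ (x + (a + b)) = Δ (x + a) + Δ (x + a) := by
    refine extreme_midpoint hKconv hL hmap hsurj hiso he hK2 hK1
      (r := 2 * (s * lam)) ?_ ?_
    · rw [hb]; module
    · abel
  have I2 : Δ (x - (a + b)) + Δ (x + (b - a)) = Δ (x - a) + Δ (x - a) := by
    refine extreme_midpoint hKconv hL hmap hsurj hiso he hK4 hK3
      (r := 2 * (s * lam)) ?_ ?_
    · rw [hb]; module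
    · abel
  have hdistb : dist (x + b) x ≤ |lam| * s := by
    rw [dist_eq_norm, add_sub_cancel_left, hnb]
  have hdistb' : dist (x - b) x ≤ |lam| * s := by
    rw [dist_eq_norm, sub_sub_cancel_left, norm_neg, hnb]
  have I3 : Δ (x + b + a) + Δ (x + b - a) = Δ (x + b) + Δ (x + b) := by
    rw [ha]
    refine hu.2 (x + b) s hs (fun w hw => hball ?_)
    refine Metric.closedBall_subset_closedBall' ?_ hw
    calc c * s + dist (x + b) x ≤ c * s + |lam| * s := by linarith
      _ = (c + |lam|) * s := by ring
  have I4 : Δ (x - b + a) + Δ (x - b - a) = Δ (x - b) + Δ (x - b) := by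
    rw [ha]
    refine hu.2 (x - b) s hs (fun w hw => hball ?_)
    refine Metric.closedBall_subset_closedBall' ?_ hw
    calc c * s + dist (x - b) x ≤ c * s + |lam| * s := by linarith
      _ = (c + |lam|) * s := by ring
  -- the candidate midpoint image
  set μ : Y := (2⁻¹:ℝ) • (Δ (x + (a + b)) + Δ (x - (a + b))) with hμ
  have hμL : μ ∈ L := by
    rw [hμ, smul_add]
    exact hL (hmap hK1) (hmap hK4) (by norm_num) (by norm_num) (by norm_num)
  obtain ⟨w, hwK, hwμ⟩ := hsurj hμL
  -- rewrite I3, I4 in standard point form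
  have I3' : Δ (x + (a + b)) + Δ (x + (b - a)) = Δ (x + b) + Δ (x + b) := by
    rw [show x + (a + b) = x + b + a by abel, show x + (b - a) = x + b - a by abel]
    exact I3
  have I4' : Δ (x + (a - b)) + Δ (x - (a + b)) = Δ (x - b) + Δ (x - b) := by
    rw [show x + (a - b) = x - b + a by abel, show x - (a + b) = x - b - a by abel]
    exact I4
  -- key algebra
  have e3 : Δ (x + (a + b)) = Δ (x + b) + Δ (x + b) - Δ (x + (b - a)) :=
    eq_sub_of_add_eq I3'
  have e2 : Δ (x - (a + b)) = Δ (x - a) + Δ (x - a) - Δ (x + (b - a)) :=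
    eq_sub_of_add_eq I2
  have e1 : Δ (x + (a + b)) = Δ (x + a) + Δ (x + a) - Δ (x + (a - b)) :=
    eq_sub_of_add_eq' I1
  have e4 : Δ (x - (a + b)) = Δ (x - b) + Δ (x - b) - Δ (x + (a - b)) :=
    eq_sub_of_add_eq' I4'
  have KA1 : μ - Δ (x + b) = Δ (x - a) - Δ (x + (b - a)) := by
    rw [hμ, e3, e2]; module
  have KA2 : μ - Δ (x - b) = Δ (x + a) - Δ (x + (a - b)) := by
    rw [hμ, e1, e4]; module
  have hwb1 : ‖w - (x + b)‖ = |lam| * s := by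
    rw [← hiso w hwK (x + b) hKpb, hwμ, KA1, hiso (x - a) hKma (x + (b - a)) hK3]
    rw [show x - a - (x + (b - a)) = -b by abel, norm_neg, hnb]
  have hwb2 : ‖w - (x - b)‖ = |lam| * s := by
    rw [← hiso w hwK (x - b) hKmb, hwμ, KA2, hiso (x + a) hKpa (x + (a - b)) hK2]
    rw [show x + a - (x + (a - b)) = b by abel, hnb]
  -- uniqueness of the metric midpoint in the extreme direction
  have hw : w = x := by
    rcases hlam0.lt_or_gt with hneg | hpos
    · have hbe : b = (|lam| * s) • (-e) := by
        rw [hb, smul_neg, ← neg_smul, abs_of_neg hneg]; ring_nf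
      refine eq_of_dist_extreme (extremePoint_neg he)
        (c := |lam| * s) (by positivity) ?_ ?_
      · rw [← hbe]; exact hwb1
      · rw [← hbe]; exact hwb2
    · have hbe : b = (|lam| * s) • e := by
        rw [hb, abs_of_pos hpos]; ring_nf
      refine eq_of_dist_extreme he (c := |lam| * s) (by positivity) ?_ ?_
      · rw [← hbe]; exact hwb1
      · rw [← hbe]; exact hwb2
  rw [hsplit]
  rw [show Δ (x + (a + b)) + Δ (x - (a + b)) = (2:ℝ) • μ by rw [hμ]; module,
    ← hwμ, hw, two_smul]

lemma isGood_sum [Nontrivial X]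
    (hKconv : Convex ℝ K) (hL : Convex ℝ L) (hmap : Set.MapsTo Δ K L)
    (hsurj : Set.SurjOn Δ K L)
    (hiso : ∀ x ∈ K, ∀ y ∈ K, ‖Δ x - Δ y‖ = ‖x - y‖)
    {ι : Type} (t : Finset ι) (wt : ι → ℝ) (z : ι → X)
    (hw : ∀ i ∈ t, 0 ≤ wt i)
    (hz : ∀ i ∈ t, z i ∈ Set.extremePoints ℝ (Metric.closedBall (0 : X) 1)) :
    IsGood K Δ (∑ i ∈ t, wt i) (∑ i ∈ t, wt i • z i) := by
  classical
  induction t using Finset.induction_on with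
  | empty => simpa using isGood_zero
  | insert _ _ hnotmem =>
    rename_i j t' ih
    rw [Finset.sum_insert hnotmem, Finset.sum_insert hnotmem]
    have ih' := ih (fun i hi => hw i (Finset.mem_insert_of_mem hi))
      (fun i hi => hz i (Finset.mem_insert_of_mem hi))
    have hj := hz j (Finset.mem_insert_self j t')
    have hwj := hw j (Finset.mem_insert_self j t')
    have := isGood_add_extreme hKconv hL hmap hsurj hiso hj
      (u := ∑ i ∈ t', wt i • z i) (c := ∑ i ∈ t', wt i) (lam := wt j) ih'
    rw [abs_of_nonneg hwj] at this
    rw [show wt j + ∑ i ∈ t', wt i = (∑ i ∈ t', wt i) + wt j by ring]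
    rw [add_comm (wt j • z j) _]
    exact this

lemma isGood_of_mem_convexHull [Nontrivial X]
    (hKconv : Convex ℝ K) (hL : Convex ℝ L) (hmap : Set.MapsTo Δ K L)
    (hsurj : Set.SurjOn Δ K L)
    (hiso : ∀ x ∈ K, ∀ y ∈ K, ‖Δ x - Δ y‖ = ‖x - y‖)
    {u : X} (hu : u ∈ convexHull ℝ (Set.extremePoints ℝ (Metric.closedBall (0 : X) 1))) :
    IsGood K Δ 1 u := by
  rw [convexHull_eq] at hu
  obtain ⟨ι, t, wt, z, hw0, hw1, hz, hcm⟩ := hu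
  have := isGood_sum hKconv hL hmap hsurj hiso t wt z hw0 hz
  rw [hw1] at this
  rwa [← hcm, Finset.centerMass_eq_of_sum_1 _ _ hw1]

lemma isGood_closure
    {S : Set X} {c : ℝ} (hS : ∀ v ∈ S, IsGood K Δ c v)
    (hiso : ∀ x ∈ K, ∀ y ∈ K, ‖Δ x - Δ y‖ = ‖x - y‖)
    {u : X} (hu : u ∈ closure S) : IsGood K Δ c u := by
  obtain ⟨f, hfS, hfu⟩ := mem_closure_iff_seq_limit.mp hu
  have hc : ∀ n, ‖f n‖ ≤ c := fun n => (hS _ (hfS n)).1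
  have hnu : ‖u‖ ≤ c := le_of_tendsto hfu.norm (Filter.Eventually.of_forall hc)
  refine ⟨hnu, fun x s hs hball => ?_⟩
  have hmem : ∀ v : X, ‖v‖ ≤ c → x + s • v ∈ K ∧ x - s • v ∈ K := by
    intro v hv
    constructor
    · apply hball
      rw [Metric.mem_closedBall, dist_eq_norm, add_sub_cancel_left, norm_smul,
        Real.norm_eq_abs, abs_of_pos hs]
      exact mul_le_mul_of_nonneg_left hv (le_of_lt hs) |>.trans (le_of_eq (by ring))
    · apply hball
      rw [Metric.mem_closedBall, dist_eq_norm,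
        show x - s • v - x = -(s • v) by abel, norm_neg, norm_smul,
        Real.norm_eq_abs, abs_of_pos hs]
      exact mul_le_mul_of_nonneg_left hv (le_of_lt hs) |>.trans (le_of_eq (by ring))
  have hid : ∀ n, Δ (x + s • f n) + Δ (x - s • f n) = Δ x + Δ x := fun n =>
    (hS _ (hfS n)).2 x s hs hball
  have h1 : Tendsto (fun n => Δ (x + s • f n)) atTop (𝓝 (Δ (x + s • u))) := by
    rw [tendsto_iff_dist_tendsto_zero]
    have heq : (fun n => dist (Δ (x + s • f n)) (Δ (x + s • u)))
        = fun n => s * dist (f n) u := by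
      funext n
      rw [dist_eq_norm, hiso _ ((hmem (f n) (hc n)).1) _ ((hmem u hnu).1),
        show x + s • f n - (x + s • u) = s • (f n - u) by module, norm_smul,
        Real.norm_eq_abs, abs_of_pos hs, dist_eq_norm]
    rw [heq]
    have := (tendsto_iff_dist_tendsto_zero.mp hfu).const_mul s
    simpa using this
  have h2 : Tendsto (fun n => Δ (x - s • f n)) atTop (𝓝 (Δ (x - s • u))) := by
    rw [tendsto_iff_dist_tendsto_zero]
    have heq : (fun n => dist (Δ (x - s • f n)) (Δ (x - s • u)))
        = fun n => s * dist (f n) u := by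
      funext n
      rw [dist_eq_norm, hiso _ ((hmem (f n) (hc n)).2) _ ((hmem u hnu).2),
        show x - s • f n - (x - s • u) = s • (u - f n) by module, norm_smul,
        Real.norm_eq_abs, abs_of_pos hs, dist_eq_norm, norm_sub_rev]
    rw [heq]
    have := (tendsto_iff_dist_tendsto_zero.mp hfu).const_mul s
    simpa using this
  have hsum := h1.add h2
  have hconst : Tendsto (fun n => Δ (x + s • f n) + Δ (x - s • f n)) atTop
      (𝓝 (Δ x + Δ x)) := by
    have : (fun n => Δ (x + s • f n) + Δ (x - s • f n)) = fun _ => Δ x + Δ x := by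
      funext n; exact hid n
    rw [this]
    exact tendsto_const_nhds
  exact tendsto_nhds_unique hsum hconst

lemma isGood_smul {c α : ℝ} {u : X} (hu : IsGood K Δ c u) (hα : 0 < α) :
    IsGood K Δ (α * c) (α • u) := by
  constructor
  · rw [norm_smul, Real.norm_eq_abs, abs_of_pos hα]
    exact mul_le_mul_of_nonneg_left hu.1 (le_of_lt hα)
  intro x s hs hball
  have := hu.2 x (s * α) (by positivity) (by
    rw [show c * (s * α) = α * c * s by ring]; exact hball)
  rw [show (s * α) • u = s • (α • u) by rw [smul_smul]] at this
  exact this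


/-- doubling of midpoint identities -/
lemma midpoint_glue {g : ℝ → Y} {h : ℝ} (hh : 0 < h)
    (hbase : ∀ t ∈ Icc (0:ℝ) 1, ∀ s ∈ Icc (0:ℝ) 1, |t - s| ≤ h →
      g ((t+s)/2) + g ((t+s)/2) = g t + g s) :
    ∀ t ∈ Icc (0:ℝ) 1, ∀ s ∈ Icc (0:ℝ) 1,
      g ((t+s)/2) + g ((t+s)/2) = g t + g s := by
  obtain ⟨n, hn⟩ : ∃ n : ℕ, 1/h < 2^n := pow_unbounded_of_one_lt (1/h) one_lt_two
  have hn' : 1 ≤ h * 2^n := by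
    rw [div_lt_iff₀ hh] at hn
    nlinarith [pow_pos (by norm_num : (0:ℝ) < 2) n]
  suffices H : ∀ n : ℕ, ∀ t ∈ Icc (0:ℝ) 1, ∀ s ∈ Icc (0:ℝ) 1, |t - s| ≤ h * 2^n →
      g ((t+s)/2) + g ((t+s)/2) = g t + g s by
    intro t ht s hs
    refine H n t ht s hs ?_
    have h1 : |t - s| ≤ 1 := by
      rw [abs_sub_le_iff]
      constructor <;> linarith [ht.1, ht.2, hs.1, hs.2]
    linarith
  intro n
  induction n with
  | zero =>
    intro t ht s hs hts
    exact hbase t ht s hs (by rw [pow_zero, mul_one] at hts; exact hts)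
  | succ n ih =>
    intro t ht s hs hts
    have h2n : (0:ℝ) < 2^n := pow_pos (by norm_num) n
    set m : ℝ := (t+s)/2 with hm
    set q1 : ℝ := (t+m)/2 with hq1
    set q2 : ℝ := (m+s)/2 with hq2
    have hmI : m ∈ Icc (0:ℝ) 1 := by
      constructor <;> [skip; skip] <;> rw [hm] <;> [linarith [ht.1, hs.1]; linarith [ht.2, hs.2]]
    have hq1I : q1 ∈ Icc (0:ℝ) 1 := by
      constructor <;> rw [hq1] <;> [linarith [ht.1, hmI.1]; linarith [ht.2, hmI.2]]
    have hq2I : q2 ∈ Icc (0:ℝ) 1 := by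
      constructor <;> rw [hq2] <;> [linarith [hs.1, hmI.1]; linarith [hs.2, hmI.2]]
    have habs : |t - m| ≤ h * 2^n := by
      rw [hm, show t - (t+s)/2 = (t-s)/2 by ring, abs_div]
      rw [pow_succ] at hts
      rw [show |(2:ℝ)| = 2 by norm_num]
      linarith
    have habs2 : |m - s| ≤ h * 2^n := by
      rw [hm, show (t+s)/2 - s = (t-s)/2 by ring, abs_div]
      rw [pow_succ] at hts
      rw [show |(2:ℝ)| = 2 by norm_num]
      linarith
    have habs3 : |q1 - q2| ≤ h * 2^n := by
      rw [hq1, hq2, hm, show (t+(t+s)/2)/2 - ((t+s)/2+s)/2 = (t-s)/2 by ring, abs_div]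
      rw [pow_succ] at hts
      rw [show |(2:ℝ)| = 2 by norm_num]
      linarith
    have e1 := ih t ht m hmI habs
    have e2 := ih m hmI s hs habs2
    have e3 := ih q1 hq1I q2 hq2I habs3
    rw [← hq1] at e1
    rw [← hq2] at e2
    have harg : (q1 + q2)/2 = m := by rw [hq1, hq2]; ring
    rw [harg] at e3
    have E1 : (g q1 + g q2) + (g q1 + g q2) = (g q1 + g q1) + (g q2 + g q2) := by abel
    rw [e1, e2] at E1
    have E2 : (g t + g m) + (g m + g s) = (g t + g s) + (g m + g m) := by abel
    rw [e3] at E2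
    have E := E1.trans E2
    have hc := add_right_cancel E
    rw [e3, hc]

/-- a continuous midpoint-affine map on `[0,1]` is affine -/
lemma affine_of_midpoint {g : ℝ → Y} {C : ℝ} (hC : 0 ≤ C)
    (hlip : ∀ t ∈ Icc (0:ℝ) 1, ∀ s ∈ Icc (0:ℝ) 1, ‖g t - g s‖ ≤ C * |t - s|)
    (hmid : ∀ t ∈ Icc (0:ℝ) 1, ∀ s ∈ Icc (0:ℝ) 1,
      g ((t+s)/2) + g ((t+s)/2) = g t + g s) :
    ∀ t ∈ Icc (0:ℝ) 1, g t = g 0 + t • (g 1 - g 0) := by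
  have hdy : ∀ n : ℕ, ∀ k : ℕ, k ≤ 2^n →
      g ((k:ℝ)/2^n) = g 0 + ((k:ℝ)/2^n) • (g 1 - g 0) := by
    intro n
    induction n with
    | zero =>
      intro k hk
      interval_cases k
      · simp
      · norm_num
    | succ n ih =>
      intro k hk
      have h2n : (0:ℝ) < 2^n := pow_pos (by norm_num) n
      have h2n' : (0:ℝ) < 2^(n+1) := pow_pos (by norm_num) (n+1)
      rcases Nat.even_or_odd k with ⟨j, hj⟩ | ⟨j, hj⟩
      · have hj' : j ≤ 2^n := by
          have : 2^(n+1) = 2 * 2^n := by rw [pow_succ]; ring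
          omega
        have harg : ((k:ℝ))/2^(n+1) = (j:ℝ)/2^n := by
          subst hj
          push_cast
          rw [pow_succ]
          field_simp
          ring
        rw [harg]
        exact ih j hj'
      · have hj' : j + 1 ≤ 2^n := by
          have : 2^(n+1) = 2 * 2^n := by rw [pow_succ]; ring
          omega
        have hjI : (j:ℝ)/2^n ∈ Icc (0:ℝ) 1 := by
          constructor
          · positivity
          · rw [div_le_one h2n]
            have : ((j:ℕ):ℝ) ≤ ((2^n : ℕ):ℝ) := Nat.cast_le.mpr (by omega)
            push_cast at this
            linarith
        have hj1I : ((j:ℝ)+1)/2^n ∈ Icc (0:ℝ) 1 := by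
          constructor
          · positivity
          · rw [div_le_one h2n]
            have : ((j+1:ℕ):ℝ) ≤ ((2^n : ℕ):ℝ) := Nat.cast_le.mpr hj'
            push_cast at this
            linarith
        have hmid' := hmid _ hjI _ hj1I
        have harg : ((j:ℝ)/2^n + ((j:ℝ)+1)/2^n)/2 = (k:ℝ)/2^(n+1) := by
          subst hj
          push_cast
          rw [pow_succ]
          field_simp
          ring
        rw [harg] at hmid'
        have e1 := ih j (by omega)
        have e2' : g (((j:ℝ)+1)/2^n) = g 0 + (((j:ℝ)+1)/2^n) • (g 1 - g 0) := by
          have := ih (j+1) hj'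
          push_cast at this
          exact this
        rw [e1, e2'] at hmid'
        have hco : ((k:ℝ)/2^(n+1)) + ((k:ℝ)/2^(n+1)) = (j:ℝ)/2^n + ((j:ℝ)+1)/2^n := by
          subst hj
          push_cast
          rw [pow_succ]
          field_simp
          ring
        have E : g ((k:ℝ)/2^(n+1)) + g ((k:ℝ)/2^(n+1))
            = (g 0 + ((k:ℝ)/2^(n+1)) • (g 1 - g 0)) + (g 0 + ((k:ℝ)/2^(n+1)) • (g 1 - g 0)) := by
          calc g ((k:ℝ)/2^(n+1)) + g ((k:ℝ)/2^(n+1))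
              = g 0 + g 0 + ((j:ℝ)/2^n + ((j:ℝ)+1)/2^n) • (g 1 - g 0) := by
                rw [hmid', add_smul]; abel
            _ = g 0 + g 0 + (((k:ℝ)/2^(n+1)) + ((k:ℝ)/2^(n+1))) • (g 1 - g 0) := by rw [hco]
            _ = (g 0 + ((k:ℝ)/2^(n+1)) • (g 1 - g 0))
                + (g 0 + ((k:ℝ)/2^(n+1)) • (g 1 - g 0)) := by rw [add_smul]; abel
        have h2 : (2:ℝ) • g ((k:ℝ)/2^(n+1))
            = (2:ℝ) • (g 0 + ((k:ℝ)/2^(n+1)) • (g 1 - g 0)) := by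
          rw [two_smul, two_smul]
          exact E
        exact smul_right_injective Y (by norm_num) h2
  -- now approximate an arbitrary t by dyadics
  intro t ht
  set v : Y := g 1 - g 0 with hv
  have hseq : ∀ n : ℕ, ∃ d : ℝ, d ∈ Icc (0:ℝ) 1 ∧ g d = g 0 + d • v ∧ |d - t| ≤ 1/2^n := by
    intro n
    have h2n : (0:ℝ) < 2^n := pow_pos (by norm_num) n
    set k : ℕ := ⌊t * 2^n⌋₊ with hk
    have hkle : (k:ℝ) ≤ t * 2^n := Nat.floor_le (by nlinarith [ht.1])
    have hklt : t * 2^n < (k:ℝ) + 1 := Nat.lt_floor_add_one _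
    have hkb : k ≤ 2^n := by
      have : (k:ℝ) ≤ ((2^n : ℕ):ℝ) := by push_cast; nlinarith [ht.2]
      exact_mod_cast this
    have hD : ((k:ℝ)/2^n) * 2^n = k := by field_simp
    have hE : ((1:ℝ)/2^n) * 2^n = 1 := by field_simp
    refine ⟨(k:ℝ)/2^n, ⟨by positivity, ?_⟩, hdy n k hkb, ?_⟩
    · rw [div_le_one h2n]
      have : ((k:ℕ):ℝ) ≤ ((2^n : ℕ):ℝ) := Nat.cast_le.mpr hkb
      push_cast at this
      linarith
    · rw [abs_le]
      constructor
      · nlinarith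
      · nlinarith
  choose d hdI hdg hdt using hseq
  have hpow : Tendsto (fun n : ℕ => (1:ℝ)/2^n) atTop (𝓝 0) := by
    have := tendsto_pow_atTop_nhds_zero_of_lt_one
      (by norm_num : (0:ℝ) ≤ 1/2) (by norm_num : (1/2:ℝ) < 1)
    have heq : (fun n : ℕ => ((1:ℝ)/2)^n) = fun n : ℕ => (1:ℝ)/2^n := by
      funext n
      rw [div_pow, one_pow]
    rwa [heq] at this
  have hdtend : Tendsto d atTop (𝓝 t) := by
    rw [tendsto_iff_dist_tendsto_zero]
    exact squeeze_zero (fun n => dist_nonneg)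
      (fun n => by rw [Real.dist_eq]; exact hdt n) hpow
  have hg1 : Tendsto (fun n => g (d n)) atTop (𝓝 (g t)) := by
    rw [tendsto_iff_dist_tendsto_zero]
    refine squeeze_zero (g := fun n : ℕ => C * (1/2^n)) (fun n => dist_nonneg)
      (fun n => ?_) ?_
    · rw [dist_eq_norm]
      refine (hlip _ (hdI n) _ ht).trans ?_
      exact mul_le_mul_of_nonneg_left (hdt n) hC
    · have := hpow.const_mul C
      simpa using this
  have hg2 : Tendsto (fun n => g (d n)) atTop (𝓝 (g 0 + t • v)) := by
    have heq : (fun n => g (d n)) = fun n => g 0 + (d n) • v := by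
      funext n; exact hdg n
    rw [heq]
    exact tendsto_const_nhds.add (hdtend.smul_const v)
  exact tendsto_nhds_unique hg1 hg2

set_option maxHeartbeats 1000000 in
lemma key_interior [Nontrivial X]
    (hKconv : Convex ℝ K) (hL : Convex ℝ L) (hmap : Set.MapsTo Δ K L)
    (hsurj : Set.SurjOn Δ K L)
    (hiso : ∀ x ∈ K, ∀ y ∈ K, ‖Δ x - Δ y‖ = ‖x - y‖)
    {δ : ℝ} (hδ : 0 < δ)
    (hδS : Metric.closedBall (0:X) δ ⊆
      closure (convexHull ℝ (Set.extremePoints ℝ (Metric.closedBall (0:X) 1))))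
    {x y : X} {ρ : ℝ} (hρ : 0 < ρ)
    (hbx : Metric.closedBall x ρ ⊆ K) (hby : Metric.closedBall y ρ ⊆ K)
    {t : ℝ} (ht : t ∈ Icc (0:ℝ) 1) :
    Δ (t • x + (1 - t) • y) = t • Δ x + (1 - t) • Δ y := by
  -- every nonzero direction is good
  have hgood : ∀ dd : X, dd ≠ 0 → IsGood K Δ (‖dd‖/δ) dd := by
    intro dd hdd
    have hnd : (0:ℝ) < ‖dd‖ := norm_pos_iff.mpr hdd
    set u : X := (δ/‖dd‖) • dd with hu
    have huball : u ∈ Metric.closedBall (0:X) δ := by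
      rw [Metric.mem_closedBall, dist_zero_right, hu, norm_smul, Real.norm_eq_abs,
        abs_of_pos (by positivity), div_mul_cancel₀ _ (ne_of_gt hnd)]
    have hu1 : IsGood K Δ 1 u :=
      isGood_closure (fun v hv => isGood_of_mem_convexHull hKconv hL hmap hsurj hiso hv)
        hiso (hδS huball)
    have hthis := isGood_smul hu1 (α := ‖dd‖/δ) (by positivity)
    have hsc : (‖dd‖/δ) • u = dd := by
      rw [hu, smul_smul, div_mul_div_comm, mul_comm,
        div_self (by positivity : δ * ‖dd‖ ≠ 0), one_smul]
    rw [mul_one, hsc] at hthis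
    exact hthis
  have hseg : ∀ τ ∈ Icc (0:ℝ) 1, Metric.closedBall (y + τ • (x - y)) ρ ⊆ K := by
    intro τ hτ w hw
    set v : X := w - (y + τ • (x - y)) with hv
    have hnv : ‖v‖ ≤ ρ := by
      rw [hv, ← dist_eq_norm]
      exact hw
    have hKy : y + v ∈ K := by
      apply hby
      rw [Metric.mem_closedBall, dist_eq_norm, add_sub_cancel_left]
      exact hnv
    have hKx : x + v ∈ K := by
      apply hbx
      rw [Metric.mem_closedBall, dist_eq_norm, add_sub_cancel_left]
      exact hnv
    have hw2 : w = (1 - τ) • (y + v) + τ • (x + v) := by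
      rw [hv]; module
    rw [hw2]
    exact hKconv hKy hKx (by linarith [hτ.2]) hτ.1 (by ring)
  have hsegK : ∀ τ ∈ Icc (0:ℝ) 1, y + τ • (x - y) ∈ K := fun τ hτ =>
    hseg τ hτ (Metric.mem_closedBall_self (le_of_lt hρ))
  have hlip : ∀ τ ∈ Icc (0:ℝ) 1, ∀ σ ∈ Icc (0:ℝ) 1,
      ‖Δ (y + τ • (x - y)) - Δ (y + σ • (x - y))‖ ≤ ‖x - y‖ * |τ - σ| := by
    intro τ hτ σ hσ
    rw [hiso _ (hsegK τ hτ) _ (hsegK σ hσ),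
      show y + τ • (x - y) - (y + σ • (x - y)) = (τ - σ) • (x - y) by module,
      norm_smul, Real.norm_eq_abs, mul_comm]
  have hh : (0:ℝ) < ρ * δ / (‖x - y‖ + 1) := by positivity
  have hbase : ∀ τ ∈ Icc (0:ℝ) 1, ∀ σ ∈ Icc (0:ℝ) 1,
      |τ - σ| ≤ ρ * δ / (‖x - y‖ + 1) →
      Δ (y + ((τ+σ)/2) • (x - y)) + Δ (y + ((τ+σ)/2) • (x - y))
        = Δ (y + τ • (x - y)) + Δ (y + σ • (x - y)) := by
    intro τ hτ σ hσ hts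
    set dd : X := ((σ - τ)/2) • (x - y) with hdd
    set m' : X := y + ((τ+σ)/2) • (x - y) with hm'
    have harg1 : y + σ • (x - y) = m' + dd := by rw [hm', hdd]; module
    have harg2 : y + τ • (x - y) = m' - dd := by rw [hm', hdd]; module
    rcases eq_or_ne dd 0 with hdd0 | hdd0
    · rw [harg1, harg2, hdd0, add_zero, sub_zero]
    · have hG := hgood dd hdd0
      have hnxy : (0:ℝ) < ‖x - y‖ + 1 := by positivity
      have hnd2 : ‖dd‖ ≤ ρ * δ := by
        rw [hdd, norm_smul, Real.norm_eq_abs, abs_div,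
          show |(2:ℝ)| = 2 by norm_num]
        have h1 : |σ - τ| ≤ ρ * δ / (‖x - y‖ + 1) := by
          rw [abs_sub_comm]; exact hts
        have h2 : |σ - τ| * (‖x - y‖ + 1) ≤ ρ * δ := by
          rw [← le_div_iff₀ hnxy]
          exact h1
        have h3 : (0:ℝ) ≤ |σ - τ| := abs_nonneg _
        have h4 : (0:ℝ) ≤ ρ * δ := by positivity
        nlinarith [norm_nonneg (x - y)]
      have hball : Metric.closedBall m' (‖dd‖/δ * 1) ⊆ K := by
        refine Subset.trans (Metric.closedBall_subset_closedBall ?_) (hseg ((τ+σ)/2) ?_)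
        · rw [mul_one, div_le_iff₀ hδ]
          linarith [hnd2]
        · constructor <;> [linarith [hτ.1, hσ.1]; linarith [hτ.2, hσ.2]]
      have hid := hG.2 m' 1 one_pos hball
      rw [one_smul] at hid
      rw [harg1, harg2, ← hid]
      abel
  have hmid := midpoint_glue (g := fun τ => Δ (y + τ • (x - y))) hh hbase
  have haff := affine_of_midpoint (g := fun τ => Δ (y + τ • (x - y))) (C := ‖x - y‖)
    (norm_nonneg _) hlip hmid t ht
  rw [zero_smul, add_zero, one_smul, show y + (x - y) = x by abel] at haff
  rw [show t • x + (1 - t) • y = y + t • (x - y) by module, haff]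
  module

end MankiewiczCore

set_option maxHeartbeats 1000000 in
/-- if the closed convex hull of the extreme points of the closed unit
ball of a real Banach space `X` has non-empty interior, then every convex body
`K ⊆ X` satisfies the strong Mankiewicz property. -/
theorem strong_mankiewicz_of_interior_nonempty
    {X : Type*} [NormedAddCommGroup X] [NormedSpace ℝ X] [CompleteSpace X]
    (hX : (interior (closure (convexHull ℝ
        (Set.extremePoints ℝ (Metric.closedBall (0 : X) 1))))).Nonempty)
    (K : Set X) (hKconv : Convex ℝ K) (hKint : (interior K).Nonempty)
    {Y : Type*} [NormedAddCommGroup Y] [NormedSpace ℝ Y]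
    (L : Set Y) (hL : Convex ℝ L)
    (Δ : X → Y) (hmap : Set.MapsTo Δ K L) (hsurj : Set.SurjOn Δ K L)
    (hiso : ∀ x ∈ K, ∀ y ∈ K, ‖Δ x - Δ y‖ = ‖x - y‖) :
    ∀ x ∈ K, ∀ y ∈ K, ∀ t : ℝ, 0 ≤ t → t ≤ 1 →
      Δ (t • x + (1 - t) • y) = t • Δ x + (1 - t) • Δ y := by
  intro x hx y hy t ht0 ht1
  by_cases hss : Subsingleton X
  · have h1 : t • x + (1 - t) • y = x := Subsingleton.elim _ _
    have h2 : y = x := Subsingleton.elim _ _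
    rw [h1, h2, ← add_smul, show t + (1 - t) = 1 by ring, one_smul]
  have hnt : Nontrivial X := not_subsingleton_iff_nontrivial.mp hss
  set E := Set.extremePoints ℝ (Metric.closedBall (0:X) 1) with hE
  set S := closure (convexHull ℝ E) with hS
  obtain ⟨c, hc⟩ := hX
  have hEneg : -E = E := by
    ext v
    rw [Set.mem_neg]
    constructor
    · intro h
      have := extremePoint_neg h
      rwa [neg_neg] at this
    · intro h
      exact extremePoint_neg h
  have hSneg : ∀ v ∈ S, -v ∈ S := by
    intro v hv
    obtain ⟨f, hfE, hfv⟩ := mem_closure_iff_seq_limit.mp hv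
    have hnf : ∀ n, -f n ∈ convexHull ℝ E := by
      intro n
      have h1 : -f n ∈ -convexHull ℝ E := Set.neg_mem_neg.mpr (hfE n)
      rw [← convexHull_neg, hEneg] at h1
      exact h1
    exact mem_closure_iff_seq_limit.mpr ⟨fun n => -f n, hnf, hfv.neg⟩
  have hmcneg : -c ∈ interior S := by
    obtain ⟨ε, hε, hball⟩ := Metric.isOpen_iff.mp isOpen_interior c hc
    refine mem_interior.mpr ⟨Metric.ball (-c) ε, ?_, Metric.isOpen_ball,
      Metric.mem_ball_self hε⟩
    intro w hw
    have h1 : -w ∈ Metric.ball c ε := by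
      rw [Metric.mem_ball] at hw ⊢
      rw [show c = -(-c) by rw [neg_neg], dist_neg_neg]
      exact hw
    have h2 := hSneg _ (interior_subset (hball h1))
    rwa [neg_neg] at h2
  have h0 : (0:X) ∈ interior S := by
    have hint : Convex ℝ (interior S) := ((convex_convexHull ℝ E).closure).interior
    have h0' : (2⁻¹:ℝ) • c + (2⁻¹:ℝ) • (-c) = 0 := by module
    rw [← h0']
    exact hint hc hmcneg (by norm_num) (by norm_num) (by norm_num)
  obtain ⟨ε₀, hε₀, hball₀⟩ := Metric.isOpen_iff.mp isOpen_interior 0 h0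
  have hδ : (0:ℝ) < ε₀/2 := by linarith
  have hδS : Metric.closedBall (0:X) (ε₀/2) ⊆ S :=
    (Metric.closedBall_subset_ball (by linarith)).trans (hball₀.trans interior_subset)
  obtain ⟨x₀, hx₀⟩ := hKint
  set ee : ℕ → ℝ := fun n => 1/(n+1) with hee
  have heep : ∀ n : ℕ, 0 < ee n := by
    intro n
    rw [hee]
    positivity
  have heel : ∀ n : ℕ, ee n ≤ 1 := by
    intro n
    rw [hee]
    simp only []
    rw [div_le_one (by positivity)]
    have : (0:ℝ) ≤ (n:ℝ) := Nat.cast_nonneg n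
    linarith
  set xn : ℕ → X := fun n => ee n • x₀ + (1 - ee n) • x with hxn
  set yn : ℕ → X := fun n => ee n • x₀ + (1 - ee n) • y with hyn
  have hxnI : ∀ n, xn n ∈ interior K := fun n =>
    hKconv.combo_interior_self_mem_interior hx₀ hx (heep n) (by linarith [heel n]) (by ring)
  have hynI : ∀ n, yn n ∈ interior K := fun n =>
    hKconv.combo_interior_self_mem_interior hx₀ hy (heep n) (by linarith [heel n]) (by ring)
  have hFn : ∀ n, Δ (t • xn n + (1-t) • yn n) = t • Δ (xn n) + (1-t) • Δ (yn n) := by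
    intro n
    obtain ⟨εx, hεx, hbx⟩ := Metric.isOpen_iff.mp isOpen_interior _ (hxnI n)
    obtain ⟨εy, hεy, hby⟩ := Metric.isOpen_iff.mp isOpen_interior _ (hynI n)
    have hρ : (0:ℝ) < min εx εy / 2 := by
      have := lt_min hεx hεy
      positivity
    refine key_interior hKconv hL hmap hsurj hiso hδ hδS hρ ?_ ?_ ⟨ht0, ht1⟩
    · refine (Metric.closedBall_subset_ball ?_).trans (hbx.trans interior_subset)
      have := min_le_left εx εy
      linarith
    · refine (Metric.closedBall_subset_ball ?_).trans (hby.trans interior_subset)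
      have := min_le_right εx εy
      linarith
  -- limits
  have heetends : Tendsto ee atTop (𝓝 0) := tendsto_one_div_add_atTop_nhds_zero_nat
  have hxtend : Tendsto xn atTop (𝓝 x) := by
    have heq : xn = fun n => x + ee n • (x₀ - x) := by
      funext n
      rw [hxn]
      simp only []
      module
    rw [heq]
    have h1 : Tendsto (fun n => ee n • (x₀ - x)) atTop (𝓝 ((0:ℝ) • (x₀ - x))) :=
      heetends.smul_const (x₀ - x)
    rw [zero_smul] at h1
    have h2 := (tendsto_const_nhds (x := x)).add h1
    rwa [add_zero] at h2
  have hytend : Tendsto yn atTop (𝓝 y) := by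
    have heq : yn = fun n => y + ee n • (x₀ - y) := by
      funext n
      rw [hyn]
      simp only []
      module
    rw [heq]
    have h1 : Tendsto (fun n => ee n • (x₀ - y)) atTop (𝓝 ((0:ℝ) • (x₀ - y))) :=
      heetends.smul_const (x₀ - y)
    rw [zero_smul] at h1
    have h2 := (tendsto_const_nhds (x := y)).add h1
    rwa [add_zero] at h2
  set an : ℕ → X := fun n => t • xn n + (1-t) • yn n with han
  have hanK : ∀ n, an n ∈ K := fun n =>
    hKconv (interior_subset (hxnI n)) (interior_subset (hynI n)) ht0 (by linarith) (by ring)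
  have haK : t • x + (1 - t) • y ∈ K := hKconv hx hy ht0 (by linarith) (by ring)
  have hantend : Tendsto an atTop (𝓝 (t • x + (1-t) • y)) := by
    rw [han]
    exact (hxtend.const_smul t).add (hytend.const_smul (1-t))
  have hDan : Tendsto (fun n => Δ (an n)) atTop (𝓝 (Δ (t • x + (1-t) • y))) := by
    rw [tendsto_iff_dist_tendsto_zero]
    have heq : (fun n => dist (Δ (an n)) (Δ (t • x + (1-t) • y)))
        = fun n => dist (an n) (t • x + (1-t) • y) := by
      funext n
      rw [dist_eq_norm, dist_eq_norm, hiso _ (hanK n) _ haK]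
    rw [heq]
    exact tendsto_iff_dist_tendsto_zero.mp hantend
  have hDxn : Tendsto (fun n => Δ (xn n)) atTop (𝓝 (Δ x)) := by
    rw [tendsto_iff_dist_tendsto_zero]
    have heq : (fun n => dist (Δ (xn n)) (Δ x)) = fun n => dist (xn n) x := by
      funext n
      rw [dist_eq_norm, dist_eq_norm, hiso _ (interior_subset (hxnI n)) _ hx]
    rw [heq]
    exact tendsto_iff_dist_tendsto_zero.mp hxtend
  have hDyn : Tendsto (fun n => Δ (yn n)) atTop (𝓝 (Δ y)) := by
    rw [tendsto_iff_dist_tendsto_zero]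
    have heq : (fun n => dist (Δ (yn n)) (Δ y)) = fun n => dist (yn n) y := by
      funext n
      rw [dist_eq_norm, dist_eq_norm, hiso _ (interior_subset (hynI n)) _ hy]
    rw [heq]
    exact tendsto_iff_dist_tendsto_zero.mp hytend
  have hRHS : Tendsto (fun n => Δ (an n)) atTop (𝓝 (t • Δ x + (1-t) • Δ y)) := by
    have heq : (fun n => Δ (an n)) = fun n => t • Δ (xn n) + (1-t) • Δ (yn n) := by
      funext n
      exact hFn n
    rw [heq]
    exact (hDxn.const_smul t).add (hDyn.const_smul (1-t))
  exact tendsto_nhds_unique hDan hRHS
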